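/- Let (X, L) be an ω-topological space. There is a one-to-one correspondence between ω-continuous valuations ν on (X, L) and linear ω-continuous functionals F : 𝓛(X, L) → [0,∞], given by F(h) = ∫ h dν in one direction and ν(U) = F(χ_U) in the other. -/

import Mathlib

open scoped ENNReal NNReal

variable {X : Type*}

/-- A lattice of subsets of `X`. -/
def IsLatt (L : Set (Set X)) : Prop :=
  ∅ ∈ L ∧ Set.univ ∈ L ∧ (∀ U ∈ L, ∀ V ∈ L, U ∪ V ∈ L) ∧ (∀ U ∈ L, ∀ V ∈ L, U ∩ V ∈ L)

/-- An ω-topology: a lattice of subsets closed under countable unions. -/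
def IsOmegaTop (L : Set (Set X)) : Prop :=
  IsLatt L ∧ ∀ U : ℕ → Set X, (∀ n, U n ∈ L) → (⋃ n, U n) ∈ L

/-- A valuation on `(X, L)`: strict, monotonic, modular. -/
def IsVal (L : Set (Set X)) (ν : Set X → ℝ≥0∞) : Prop :=
  ν ∅ = 0 ∧ (∀ U ∈ L, ∀ V ∈ L, U ⊆ V → ν U ≤ ν V) ∧
    (∀ U ∈ L, ∀ V ∈ L, ν U + ν V = ν (U ∪ V) + ν (U ∩ V))

/-- ω-continuity of a valuation: it preserves suprema of monotone sequences of sets. -/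
def IsOmegaContVal (L : Set (Set X)) (ν : Set X → ℝ≥0∞) : Prop :=
  ∀ U : ℕ → Set X, (∀ n, U n ∈ L) → Monotone U → ν (⋃ n, U n) = ⨆ n, ν (U n)

/-- `𝓛(X, L)`: maps `h : X → ℝ≥0∞` with `h⁻¹((t,∞]) ∈ L` for all `t ≥ 0`. -/
def MemL (L : Set (Set X)) (h : X → ℝ≥0∞) : Prop :=
  ∀ t : ℝ≥0, {x | (t : ℝ≥0∞) < h x} ∈ L

/-- The improper Riemann integral `∫₀^∞ f(t) dt` of an antitonic map `f : ℝ≥0 → ℝ≥0∞`,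
realized as a Lebesgue integral over `(0, ∞)`. -/
noncomputable def riem (f : ℝ≥0 → ℝ≥0∞) : ℝ≥0∞ :=
  ∫⁻ t in Set.Ioi (0 : ℝ), f t.toNNReal

/-- The Choquet integral `∫ h dν = ∫₀^∞ ν(h⁻¹((t,∞])) dt`. -/
noncomputable def choquet (ν : Set X → ℝ≥0∞) (h : X → ℝ≥0∞) : ℝ≥0∞ :=
  riem fun t => ν {x | (t : ℝ≥0∞) < h x}

/-- The characteristic map of `U`. -/
noncomputable def chi (U : Set X) : X → ℝ≥0∞ :=
  U.indicator fun _ => 1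

/-- `(g·μ)(U) := ∫ χ_U·g dμ`. -/
noncomputable def densMul (g : X → ℝ≥0∞) (μ : Set X → ℝ≥0∞) (U : Set X) : ℝ≥0∞ :=
  choquet μ fun x => chi U x * g x

/-- `(g·μ)(C) = ∫₀^∞ μ(C ∩ g⁻¹((t,∞])) dt`, the explicit formula for the density valuation. -/
noncomputable def densF (g : X → ℝ≥0∞) (μ : Set X → ℝ≥0∞) (C : Set X) : ℝ≥0∞ :=
  riem fun t => μ (C ∩ {x | (t : ℝ≥0∞) < g x})

/-- The smallest algebra of subsets of `X` containing `L`. -/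
def genAlg (L : Set (Set X)) : Set (Set X) :=
  {C | ∀ A : Set (Set X),
    (L ⊆ A ∧ ∅ ∈ A ∧ (∀ S ∈ A, Sᶜ ∈ A) ∧ (∀ S ∈ A, ∀ T ∈ A, S ∪ T ∈ A)) → C ∈ A}

/-- A crescent: a difference of two elements of `L`. -/
def IsCrescent (L : Set (Set X)) (C : Set X) : Prop :=
  ∃ U ∈ L, ∃ V ∈ L, C = U \ V

/-- A signed valuation: strict and modular, real-valued. -/
def IsSignedVal (L : Set (Set X)) (ς : Set X → ℝ) : Prop :=
  ς ∅ = 0 ∧ ∀ U ∈ L, ∀ V ∈ L, ς (U ∪ V) + ς (U ∩ V) = ς U + ς V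

/-- The Hahn decomposition property of a signed valuation `ς` on `(X, L)`: stated via any
signed valuation extending `ς` to the generated algebra (such an extension is unique). -/
def HasHahn (L : Set (Set X)) (ς : Set X → ℝ) : Prop :=
  ∀ ς' : Set X → ℝ, IsSignedVal (genAlg L) ς' → (∀ U ∈ L, ς' U = ς U) →
    ∃ U ∈ L, (∀ C, IsCrescent L C → C ⊆ U → 0 ≤ ς' C) ∧
      (∀ C, IsCrescent L C → Disjoint C U → ς' C ≤ 0)

/-- A linear, ω-continuous functional on `𝓛(X, L)`. -/
def IsLinOmegaFunc (L : Set (Set X)) (F : (X → ℝ≥0∞) → ℝ≥0∞) : Prop :=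
  (∀ a : ℝ≥0, ∀ h : X → ℝ≥0∞, MemL L h →
      F (fun x => (a : ℝ≥0∞) * h x) = (a : ℝ≥0∞) * F h) ∧
  (∀ h h' : X → ℝ≥0∞, MemL L h → MemL L h' →
      F (fun x => h x + h' x) = F h + F h') ∧
  (∀ h : ℕ → X → ℝ≥0∞, (∀ n, MemL L (h n)) → Monotone h →
      F (fun x => ⨆ n, h n x) = ⨆ n, F (h n))

section Aux

variable {L : Set (Set X)}

lemma chi_mem {U : Set X} {x : X} (h : x ∈ U) : chi U x = 1 := Set.indicator_of_mem h _

lemma chi_not_mem {U : Set X} {x : X} (h : x ∉ U) : chi U x = 0 := Set.indicator_of_notMem h _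

lemma chi_zero : chi (∅ : Set X) = fun _ => 0 := by
  funext x; simp [chi]

lemma memL_zero (hL : IsOmegaTop L) : MemL L (fun _ : X => (0 : ℝ≥0∞)) := by
  intro t
  have : {x : X | (t : ℝ≥0∞) < 0} = ∅ := by ext x; simp
  rw [this]; exact hL.1.1

lemma memL_chi (hL : IsOmegaTop L) {U : Set X} (hU : U ∈ L) : MemL L (chi U) := by
  intro t
  by_cases h1 : (t : ℝ≥0∞) < 1
  · have : {x : X | (t : ℝ≥0∞) < chi U x} = U := by
      ext x
      simp only [Set.mem_setOf_eq]
      by_cases hx : x ∈ U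
      · simp [chi_mem hx, hx, h1]
      · simp [chi_not_mem hx, hx]
    rw [this]; exact hU
  · have : {x : X | (t : ℝ≥0∞) < chi U x} = ∅ := by
      ext x
      simp only [Set.mem_setOf_eq, Set.mem_empty_iff_false, iff_false, not_lt]
      by_cases hx : x ∈ U
      · simp [chi_mem hx, not_lt.mp h1]
      · simp [chi_not_mem hx]
    rw [this]; exact hL.1.1

lemma memL_smul (hL : IsOmegaTop L) {h : X → ℝ≥0∞} (hh : MemL L h) (a : ℝ≥0) :
    MemL L (fun x => (a : ℝ≥0∞) * h x) := by
  intro t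
  rcases eq_or_ne a 0 with rfl | ha
  · have : {x : X | (t : ℝ≥0∞) < (0:ℝ≥0) * h x} = ∅ := by ext x; simp
    rw [this]; exact hL.1.1
  · have : {x : X | (t : ℝ≥0∞) < (a : ℝ≥0∞) * h x} = {x : X | ((t / a : ℝ≥0) : ℝ≥0∞) < h x} := by
      ext x
      simp only [Set.mem_setOf_eq]
      rw [ENNReal.coe_div ha,
        ENNReal.div_lt_iff (Or.inl (by exact_mod_cast ha)) (Or.inl ENNReal.coe_ne_top), mul_comm]
    rw [this]; exact hh _

lemma memL_add (hL : IsOmegaTop L) {h h' : X → ℝ≥0∞} (hh : MemL L h) (hh' : MemL L h') :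
    MemL L (fun x => h x + h' x) := by
  intro t
  set S : ℚ → Set X := fun q =>
    {x | ((Real.toNNReal q : ℝ≥0) : ℝ≥0∞) < h x} ∩
      {x | ((t - Real.toNNReal q : ℝ≥0) : ℝ≥0∞) < h' x} with hS
  have hSL : ∀ q, S q ∈ L := fun q => hL.1.2.2.2 _ (hh _) _ (hh' _)
  have key : {x : X | (t : ℝ≥0∞) < h x + h' x}
      = {x : X | (t : ℝ≥0∞) < h x} ∪ ({x : X | (t : ℝ≥0∞) < h' x} ∪ ⋃ q : ℚ, S q) := by
    ext x
    simp only [Set.mem_setOf_eq, Set.mem_union, Set.mem_iUnion, hS, Set.mem_inter_iff]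
    constructor
    · intro hx
      by_cases h1 : (t : ℝ≥0∞) < h x
      · exact Or.inl h1
      by_cases h2 : (t : ℝ≥0∞) < h' x
      · exact Or.inr (Or.inl h2)
      right; right
      push_neg at h1 h2
      have hhx : h x ≠ ∞ := ne_top_of_le_ne_top ENNReal.coe_ne_top h1
      have hhx' : h' x ≠ ∞ := ne_top_of_le_ne_top ENNReal.coe_ne_top h2
      lift h x to ℝ≥0 using hhx with a ha
      lift h' x to ℝ≥0 using hhx' with b hb
      rw [← ENNReal.coe_add, ENNReal.coe_lt_coe] at hx
      rw [ENNReal.coe_le_coe] at h1 h2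
      have hab : (t : ℝ) - b < a := by
        have := (NNReal.coe_lt_coe).2 hx
        push_cast at this ⊢
        linarith
      obtain ⟨q, hq1, hq2⟩ := exists_rat_btwn hab
      refine ⟨q, ?_, ?_⟩
      · rw [ENNReal.coe_lt_coe]
        have hq0 : (0:ℝ) ≤ (q:ℝ) := by
          have : (0:ℝ) ≤ (t : ℝ) - b := by
            have := (NNReal.coe_le_coe).2 h2; linarith
          linarith
        exact (Real.toNNReal_lt_iff_lt_coe hq0).2 hq2
      · rw [ENNReal.coe_lt_coe]
        have hqt : (q:ℝ).toNNReal ≤ t := by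
          rw [Real.toNNReal_le_iff_le_coe]
          exact le_trans hq2.le ((NNReal.coe_le_coe).2 h1)
        have : ((t - (q:ℝ).toNNReal : ℝ≥0) : ℝ) < (b : ℝ) := by
          rw [NNReal.coe_sub hqt]
          have hq0 : (0:ℝ) ≤ (q:ℝ) := by
            have : (0:ℝ) ≤ (t : ℝ) - b := by
              have := (NNReal.coe_le_coe).2 h2; linarith
            linarith
          rw [Real.coe_toNNReal _ hq0]
          linarith
        exact_mod_cast this
    · rintro (h1 | h2 | ⟨q, hq1, hq2⟩)
      · exact lt_of_lt_of_le h1 le_self_add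
      · exact lt_of_lt_of_le h2 le_add_self
      · calc (t : ℝ≥0∞) ≤ ((Real.toNNReal q : ℝ≥0) : ℝ≥0∞) + ((t - Real.toNNReal q : ℝ≥0) : ℝ≥0∞) := by
              rw [← ENNReal.coe_add, ENNReal.coe_le_coe]; exact le_add_tsub
          _ < h x + h' x := ENNReal.add_lt_add hq1 hq2
  rw [key]
  have : (⋃ q : ℚ, S q) ∈ L := by
    have e : ℕ ≃ ℚ := (Denumerable.eqv ℚ).symm
    have : (⋃ q : ℚ, S q) = ⋃ n : ℕ, S (e n) := (e.surjective.iUnion_comp S).symm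
    rw [this]; exact hL.2 _ fun n => hSL _
  exact hL.1.2.2.1 _ (hh _) _ (hL.1.2.2.1 _ (hh' _) _ this)

lemma memL_iSup (hL : IsOmegaTop L) {h : ℕ → X → ℝ≥0∞} (hh : ∀ n, MemL L (h n)) :
    MemL L (fun x => ⨆ n, h n x) := by
  intro t
  have : {x : X | (t : ℝ≥0∞) < ⨆ n, h n x} = ⋃ n, {x : X | (t : ℝ≥0∞) < h n x} := by
    ext x; simp [lt_iSup_iff]
  rw [this]; exact hL.2 _ fun n => hh n _

end Aux
section Aux2

open MeasureTheory Set

variable {L : Set (Set X)} {ν : Set X → ℝ≥0∞}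

lemma choquet_eq (ν : Set X → ℝ≥0∞) (h : X → ℝ≥0∞) :
    choquet ν h = ∫⁻ t in Set.Ioi (0 : ℝ), ν {x | ((t.toNNReal : ℝ≥0) : ℝ≥0∞) < h x} := rfl

lemma nu_meas (hmono : ∀ U ∈ L, ∀ V ∈ L, U ⊆ V → ν U ≤ ν V) {g : ℝ → Set X}
    (hgL : ∀ t, g t ∈ L) (hga : Antitone g) : Measurable fun t => ν (g t) :=
  Antitone.measurable fun s t hst => hmono _ (hgL t) _ (hgL s) (hga hst)

lemma lvlSet_mem {h : X → ℝ≥0∞} (hh : MemL L h) (t : ℝ) :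
    {x | ((t.toNNReal : ℝ≥0) : ℝ≥0∞) < h x} ∈ L := hh _

lemma lvlSet_anti (h : X → ℝ≥0∞) :
    Antitone fun t : ℝ => {x | ((t.toNNReal : ℝ≥0) : ℝ≥0∞) < h x} := by
  intro s t hst x hx
  simp only [Set.mem_setOf_eq] at hx ⊢
  exact lt_of_le_of_lt (ENNReal.coe_le_coe.2 (Real.toNNReal_mono hst)) hx

lemma choquet_zero' (hν0 : ν ∅ = 0) : choquet ν (fun _ : X => (0 : ℝ≥0∞)) = 0 := by
  rw [choquet_eq]
  rw [show (∫⁻ t in Set.Ioi (0:ℝ), ν {x | ((t.toNNReal : ℝ≥0) : ℝ≥0∞) < (fun _ : X => (0:ℝ≥0∞)) x})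
      = ∫⁻ _ in Set.Ioi (0:ℝ), 0 from
    setLIntegral_congr_fun measurableSet_Ioi (fun t _ => by
      rw [show {x : X | ((t.toNNReal : ℝ≥0) : ℝ≥0∞) < (fun _ : X => (0:ℝ≥0∞)) x} = ∅ from by
        ext x; simp]
      exact hν0)]
  simp

/-- Monotone convergence for the Choquet integral. -/
lemma choquet_iSup (hmono : ∀ U ∈ L, ∀ V ∈ L, U ⊆ V → ν U ≤ ν V) (hc : IsOmegaContVal L ν)
    {h : ℕ → X → ℝ≥0∞} (hh : ∀ n, MemL L (h n)) (hm : Monotone h) :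
    choquet ν (fun x => ⨆ n, h n x) = ⨆ n, choquet ν (h n) := by
  rw [choquet_eq]
  have key : ∀ t : ℝ, ν {x | ((t.toNNReal : ℝ≥0) : ℝ≥0∞) < ⨆ n, h n x}
      = ⨆ n, ν {x | ((t.toNNReal : ℝ≥0) : ℝ≥0∞) < h n x} := by
    intro t
    rw [show {x | ((t.toNNReal : ℝ≥0) : ℝ≥0∞) < ⨆ n, h n x}
        = ⋃ n, {x | ((t.toNNReal : ℝ≥0) : ℝ≥0∞) < h n x} from by ext x; simp [lt_iSup_iff]]
    exact hc _ (fun n => hh n _) fun m n hmn x hx => lt_of_lt_of_le hx (hm hmn x)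
  calc (∫⁻ t in Set.Ioi (0:ℝ), ν {x | ((t.toNNReal : ℝ≥0) : ℝ≥0∞) < ⨆ n, h n x})
      = ∫⁻ t in Set.Ioi (0:ℝ), ⨆ n, ν {x | ((t.toNNReal : ℝ≥0) : ℝ≥0∞) < h n x} := by
        exact setLIntegral_congr_fun measurableSet_Ioi
          (fun t _ => key t)
    _ = ⨆ n, ∫⁻ t in Set.Ioi (0:ℝ), ν {x | ((t.toNNReal : ℝ≥0) : ℝ≥0∞) < h n x} := by
        refine lintegral_iSup (fun n => nu_meas hmono (fun t => lvlSet_mem (hh n) t)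
          (lvlSet_anti (h n))) ?_
        intro m n hmn t
        exact hmono _ (lvlSet_mem (hh m) t) _ (lvlSet_mem (hh n) t) fun x hx =>
          lt_of_lt_of_le hx (hm hmn x)
    _ = ⨆ n, choquet ν (h n) := rfl

lemma choquet_scaled_chi (hν : IsVal L ν) {U : Set X} (hU : U ∈ L) (c : ℝ≥0) :
    choquet ν (fun x => (c : ℝ≥0∞) * chi U x) = (c : ℝ≥0∞) * ν U := by
  rw [choquet_eq]
  have key : ∀ t ∈ Set.Ioi (0:ℝ),
      ν {x | ((t.toNNReal : ℝ≥0) : ℝ≥0∞) < (fun x => (c : ℝ≥0∞) * chi U x) x}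
        = (Set.Ioo (0:ℝ) (c:ℝ)).indicator (fun _ => ν U) t := by
    intro t ht
    by_cases htc : t < (c : ℝ)
    · have hmem : t ∈ Set.Ioo (0:ℝ) (c:ℝ) := ⟨ht, htc⟩
      rw [Set.indicator_of_mem hmem]
      congr 1
      ext x
      simp only [Set.mem_setOf_eq]
      by_cases hx : x ∈ U
      · simp only [chi_mem hx, mul_one, hx, iff_true]
        exact_mod_cast (Real.toNNReal_lt_iff_lt_coe (le_of_lt ht)).2 htc
      · simp [chi_not_mem hx, hx]
    · have hmem : t ∉ Set.Ioo (0:ℝ) (c:ℝ) := fun hcon => htc hcon.2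
      rw [Set.indicator_of_notMem hmem]
      rw [show {x | ((t.toNNReal : ℝ≥0) : ℝ≥0∞) < (fun x => (c : ℝ≥0∞) * chi U x) x} = ∅ from by
        ext x
        simp only [Set.mem_setOf_eq, Set.mem_empty_iff_false, iff_false, not_lt]
        by_cases hx : x ∈ U
        · simp only [chi_mem hx, mul_one]
          exact_mod_cast (Real.le_toNNReal_iff_coe_le (le_of_lt ht)).2 (not_lt.mp htc)
        · simp [chi_not_mem hx]]
      exact hν.1
  rw [setLIntegral_congr_fun measurableSet_Ioi key]
  rw [setLIntegral_indicator measurableSet_Ioo]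
  rw [setLIntegral_const]
  rw [show Set.Ioo (0:ℝ) (c:ℝ) ∩ Set.Ioi 0 = Set.Ioo (0:ℝ) (c:ℝ) from
    Set.inter_eq_self_of_subset_left fun x hx => hx.1]
  rw [Real.volume_Ioo, mul_comm]
  congr 1
  rw [sub_zero, ENNReal.ofReal_coe_nnreal]

lemma choquet_chi (hν : IsVal L ν) {U : Set X} (hU : U ∈ L) : choquet ν (chi U) = ν U := by
  have := choquet_scaled_chi hν hU 1
  simpa using this

end Aux2
section Aux3

open MeasureTheory Set

variable {L : Set (Set X)} {ν : Set X → ℝ≥0∞}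

lemma toNNReal_sub_coe {c : ℝ≥0} {t : ℝ} (h : (c : ℝ) ≤ t) :
    (t - (c : ℝ)).toNNReal = t.toNNReal - c := by
  have h0 : (0:ℝ) ≤ t := le_trans c.coe_nonneg h
  apply NNReal.coe_injective
  rw [Real.coe_toNNReal _ (by linarith)]
  rw [NNReal.coe_sub ((Real.le_toNNReal_iff_coe_le h0).2 h)]
  rw [Real.coe_toNNReal _ h0]

/-- The key lemma: adding a scaled characteristic map adds `c·ν(V)` to the Choquet integral. -/
lemma choquet_add_chi (hL : IsOmegaTop L) (hν : IsVal L ν) {h : X → ℝ≥0∞} (hh : MemL L h)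
    {V : Set X} (hV : V ∈ L) (c : ℝ≥0) :
    choquet ν (fun x => h x + (c : ℝ≥0∞) * chi V x) = choquet ν h + (c : ℝ≥0∞) * ν V := by
  obtain ⟨hν0, hmono, hmod⟩ := hν
  rcases eq_or_ne c 0 with rfl | hc
  · simp only [ENNReal.coe_zero, zero_mul, add_zero]
  have hc' : (0:ℝ) < (c:ℝ) := by exact_mod_cast hc.bot_lt
  set g : X → ℝ≥0∞ := fun x => h x + (c : ℝ≥0∞) * chi V x with hg
  have hgmem : MemL L g := memL_add hL hh (memL_smul hL (memL_chi hL hV) c)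
  set H : ℝ → Set X := fun t => {x | ((t.toNNReal : ℝ≥0) : ℝ≥0∞) < h x} with hH
  set A : ℝ → ℝ≥0∞ := fun t => ν {x | ((t.toNNReal : ℝ≥0) : ℝ≥0∞) < g x} with hA
  set R : ℝ → ℝ≥0∞ := fun t => ν (H t) with hR
  set P : ℝ → ℝ≥0∞ := fun t => ν (V ∩ H t) with hP
  set Q : ℝ → ℝ≥0∞ := fun s => if s < 0 then ν V else ν (V ∩ H s) with hQ
  have hHsub : ∀ {s t : ℝ}, s ≤ t → H t ⊆ H s := fun hst => lvlSet_anti h hst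
  have hHL : ∀ t, H t ∈ L := fun t => hh _
  have hVHL : ∀ t, V ∩ H t ∈ L := fun t => hL.1.2.2.2 _ hV _ (hHL t)
  -- pointwise identity
  have key : ∀ t ∈ Set.Ioi (0:ℝ), A t + P t = Q (t - (c:ℝ)) + R t := by
    intro t ht
    rw [Set.mem_Ioi] at ht
    by_cases htc : t < (c : ℝ)
    · have hQv : Q (t - (c:ℝ)) = ν V := if_pos (by linarith)
      have hlvl : {x | ((t.toNNReal : ℝ≥0) : ℝ≥0∞) < g x} = V ∪ H t := by
        ext x
        simp only [Set.mem_setOf_eq, Set.mem_union, hg, hH]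
        by_cases hx : x ∈ V
        · simp only [chi_mem hx, mul_one, hx, true_or, iff_true]
          calc ((t.toNNReal : ℝ≥0) : ℝ≥0∞) < (c : ℝ≥0∞) := by
                exact_mod_cast (Real.toNNReal_lt_iff_lt_coe ht.le).2 htc
            _ ≤ h x + c := le_add_self
        · simp [chi_not_mem hx, hx]
      rw [show A t = ν (V ∪ H t) from congrArg ν hlvl, hQv]
      exact (hmod V hV (H t) (hHL t)).symm
    · have htc' : (c:ℝ) ≤ t := not_lt.mp htc
      have hQv : Q (t - (c:ℝ)) = ν (V ∩ H (t - (c:ℝ))) := if_neg (by linarith)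
      have hsub : H t ⊆ H (t - (c:ℝ)) := hHsub (by linarith)
      have hiff : ∀ b : ℝ≥0∞, (((t - (c:ℝ)).toNNReal : ℝ≥0) : ℝ≥0∞) < b ↔
          ((t.toNNReal : ℝ≥0) : ℝ≥0∞) < b + (c : ℝ≥0∞) := by
        intro b
        rw [toNNReal_sub_coe htc', ENNReal.coe_sub]
        exact ENNReal.sub_lt_iff_lt_right ENNReal.coe_ne_top
          (ENNReal.coe_le_coe.2 ((Real.le_toNNReal_iff_coe_le ht.le).2 htc'))
      have hlvl : {x | ((t.toNNReal : ℝ≥0) : ℝ≥0∞) < g x} = (V ∩ H (t - (c:ℝ))) ∪ H t := by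
        ext x
        simp only [Set.mem_setOf_eq, Set.mem_union, Set.mem_inter_iff, hg, hH]
        by_cases hx : x ∈ V
        · simp only [chi_mem hx, mul_one, hx, true_and]
          constructor
          · intro hlt
            exact Or.inl ((hiff (h x)).2 hlt)
          · rintro (hmem | hmem)
            · exact (hiff (h x)).1 hmem
            · exact lt_of_lt_of_le hmem le_self_add
        · simp [chi_not_mem hx, hx]
      rw [show A t = ν ((V ∩ H (t - (c:ℝ))) ∪ H t) from congrArg ν hlvl, hQv]
      have hmodap := hmod _ (hVHL (t - (c:ℝ))) (H t) (hHL t)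
      have hint : (V ∩ H (t - (c:ℝ))) ∩ H t = V ∩ H t := by
        rw [Set.inter_assoc, Set.inter_eq_right.2 hsub]
      rw [hint] at hmodap
      exact hmodap.symm
  -- measurability
  have hAmeas : Measurable A := nu_meas hmono (fun t => hgmem _) (lvlSet_anti g)
  have hPmeas : Measurable P := nu_meas hmono hVHL
    (fun s t hst => Set.inter_subset_inter_right V (hHsub hst))
  have hRmeas : Measurable R := nu_meas hmono hHL (lvlSet_anti h)
  have hQanti : Antitone Q := by
    intro s t hst
    by_cases hs : s < 0
    · rw [hQ]
      simp only
      rw [if_pos hs]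
      by_cases htn : t < 0
      · rw [if_pos htn]
      · rw [if_neg htn]
        exact hmono _ (hVHL t) _ hV Set.inter_subset_left
    · have htn : ¬ t < 0 := fun hcon => hs (lt_of_le_of_lt hst hcon)
      rw [hQ]
      simp only
      rw [if_neg hs, if_neg htn]
      exact hmono _ (hVHL t) _ (hVHL s) (Set.inter_subset_inter_right V (hHsub hst))
  have hQmeas : Measurable Q := hQanti.measurable
  have hQshmeas : Measurable fun t : ℝ => Q (t - (c:ℝ)) :=
    hQmeas.comp (measurable_id.sub measurable_const)
  -- integral identity
  have hint1 : (∫⁻ t in Set.Ioi (0:ℝ), A t) + ∫⁻ t in Set.Ioi (0:ℝ), P t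
      = (∫⁻ t in Set.Ioi (0:ℝ), Q (t - (c:ℝ))) + ∫⁻ t in Set.Ioi (0:ℝ), R t := by
    rw [← lintegral_add_left hAmeas, ← lintegral_add_left hQshmeas]
    exact setLIntegral_congr_fun measurableSet_Ioi key
  -- the shifted integral
  have hshift : (∫⁻ t in Set.Ioi (0:ℝ), Q (t - (c:ℝ)))
      = (c : ℝ≥0∞) * ν V + ∫⁻ t in Set.Ioi (0:ℝ), Q t := by
    have e1 : (∫⁻ t in Set.Ioi (0:ℝ), Q (t - (c:ℝ)))
        = ∫⁻ t, (Set.Ioi (-(c:ℝ))).indicator Q (t - (c:ℝ)) := by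
      rw [← lintegral_indicator measurableSet_Ioi]
      congr 1
      funext t
      by_cases ht : t ∈ Set.Ioi (0:ℝ)
      · rw [Set.indicator_of_mem ht, Set.indicator_of_mem]
        rw [Set.mem_Ioi] at ht ⊢; linarith
      · rw [Set.indicator_of_notMem ht, Set.indicator_of_notMem]
        rw [Set.mem_Ioi] at ht ⊢; intro hcon; exact ht (by linarith)
    rw [e1, lintegral_sub_right_eq_self ((Set.Ioi (-(c:ℝ))).indicator Q) (c:ℝ)]
    rw [lintegral_indicator measurableSet_Ioi]
    rw [← Set.Ioc_union_Ioi_eq_Ioi (by linarith : -(c:ℝ) ≤ 0)]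
    rw [lintegral_union measurableSet_Ioi (Set.Ioc_disjoint_Ioi le_rfl)]
    congr 1
    rw [← setLIntegral_congr (Ioo_ae_eq_Ioc (a := -(c:ℝ)) (b := (0:ℝ)))]
    rw [show (∫⁻ s in Set.Ioo (-(c:ℝ)) 0, Q s) = ∫⁻ _ in Set.Ioo (-(c:ℝ)) 0, ν V from
      setLIntegral_congr_fun measurableSet_Ioo (fun s hs =>
        if_pos hs.2)]
    rw [setLIntegral_const, Real.volume_Ioo, mul_comm]
    congr 1
    rw [sub_neg_eq_add, zero_add, ENNReal.ofReal_coe_nnreal]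
  have hQP : (∫⁻ t in Set.Ioi (0:ℝ), Q t) = ∫⁻ t in Set.Ioi (0:ℝ), P t :=
    setLIntegral_congr_fun measurableSet_Ioi (fun t ht =>
      if_neg (by rw [Set.mem_Ioi] at ht; linarith))
  rw [hshift, hQP] at hint1
  -- identify choquet integrals
  have hcg : choquet ν g = ∫⁻ t in Set.Ioi (0:ℝ), A t := rfl
  have hch : choquet ν h = ∫⁻ t in Set.Ioi (0:ℝ), R t := rfl
  by_cases hPtop : (∫⁻ t in Set.Ioi (0:ℝ), P t) = ⊤
  · have hPR : (∫⁻ t in Set.Ioi (0:ℝ), P t) ≤ ∫⁻ t in Set.Ioi (0:ℝ), R t :=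
      lintegral_mono fun t => hmono _ (hVHL t) _ (hHL t) Set.inter_subset_right
    have hRA : (∫⁻ t in Set.Ioi (0:ℝ), R t) ≤ ∫⁻ t in Set.Ioi (0:ℝ), A t := by
      refine lintegral_mono fun t => hmono _ (hHL t) _ (hgmem _) fun x hx => ?_
      have hx' : ((t.toNNReal : ℝ≥0) : ℝ≥0∞) < h x := hx
      exact lt_of_lt_of_le hx' le_self_add
    have hRtop : (∫⁻ t in Set.Ioi (0:ℝ), R t) = ⊤ := top_le_iff.1 (le_trans hPtop.ge hPR)
    rw [hcg, hch, hRtop, top_add]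
    exact top_le_iff.1 (le_trans hRtop.ge hRA)
  · rw [hcg, hch]
    have : (∫⁻ t in Set.Ioi (0:ℝ), A t) + ∫⁻ t in Set.Ioi (0:ℝ), P t
        = ((∫⁻ t in Set.Ioi (0:ℝ), R t) + (c : ℝ≥0∞) * ν V) + ∫⁻ t in Set.Ioi (0:ℝ), P t := by
      rw [hint1]; ring
    exact (ENNReal.add_left_inj hPtop).1 this
section Aux4

variable {L : Set (Set X)} {ν : Set X → ℝ≥0∞} {F : (X → ℝ≥0∞) → ℝ≥0∞}

/-- A layered sum of scaled characteristic maps. -/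
noncomputable def lay (c : ℝ≥0) (U : ℕ → Set X) (m : ℕ) : X → ℝ≥0∞ :=
  fun x => ∑ k ∈ Finset.range m, (c : ℝ≥0∞) * chi (U k) x

lemma lay_zero (c : ℝ≥0) (U : ℕ → Set X) : lay c U 0 = fun _ => 0 := by
  funext x; simp [lay]

lemma lay_succ (c : ℝ≥0) (U : ℕ → Set X) (m : ℕ) :
    lay c U (m + 1) = fun x => lay c U m x + (c : ℝ≥0∞) * chi (U m) x := by
  funext x; simp [lay, Finset.sum_range_succ]

lemma memL_lay (hL : IsOmegaTop L) {U : ℕ → Set X} (hU : ∀ k, U k ∈ L) (c : ℝ≥0) :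
    ∀ m, MemL L (lay c U m)
  | 0 => by rw [lay_zero]; exact memL_zero hL
  | m + 1 => by
      rw [lay_succ]
      exact memL_add hL (memL_lay hL hU c m) (memL_smul hL (memL_chi hL (hU m)) c)

lemma choquet_add_lay (hL : IsOmegaTop L) (hν : IsVal L ν) {h : X → ℝ≥0∞} (hh : MemL L h)
    {U : ℕ → Set X} (hU : ∀ k, U k ∈ L) (c : ℝ≥0) (m : ℕ) :
    choquet ν (fun x => h x + lay c U m x)
      = choquet ν h + ∑ k ∈ Finset.range m, (c : ℝ≥0∞) * ν (U k) := by
  induction m with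
  | zero =>
      rw [lay_zero]
      simp only [add_zero, Finset.range_zero, Finset.sum_empty]
  | succ m ih =>
      have e : (fun x => h x + lay c U (m + 1) x)
          = fun x => (h x + lay c U m x) + (c : ℝ≥0∞) * chi (U m) x := by
        funext x; rw [lay_succ]; exact (add_assoc _ _ _).symm
      rw [e]
      have := choquet_add_chi (h := fun x => h x + lay c U m x) hL hν
        (memL_add hL hh (memL_lay hL hU c m)) (hU m) c
      rw [this, ih, Finset.sum_range_succ, add_assoc]

lemma choquet_lay (hL : IsOmegaTop L) (hν : IsVal L ν) {U : ℕ → Set X} (hU : ∀ k, U k ∈ L)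
    (c : ℝ≥0) (m : ℕ) :
    choquet ν (lay c U m) = ∑ k ∈ Finset.range m, (c : ℝ≥0∞) * ν (U k) := by
  have := choquet_add_lay (h := fun _ => 0) hL hν (memL_zero hL) hU c m
  simp only [zero_add] at this
  rw [show (fun x => lay c U m x) = lay c U m from rfl] at this
  rw [this, choquet_zero' hν.1, zero_add]

lemma F_zero (hL : IsOmegaTop L) (hF : IsLinOmegaFunc L F) : F (fun _ => 0) = 0 := by
  have := hF.1 0 (fun _ => 0) (memL_zero hL)
  simpa using this

lemma F_lay (hL : IsOmegaTop L) (hF : IsLinOmegaFunc L F) {U : ℕ → Set X} (hU : ∀ k, U k ∈ L)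
    (c : ℝ≥0) (m : ℕ) :
    F (lay c U m) = ∑ k ∈ Finset.range m, (c : ℝ≥0∞) * F (chi (U k)) := by
  induction m with
  | zero => rw [lay_zero]; simpa using F_zero hL hF
  | succ m ih =>
      rw [lay_succ]
      have h2 := hF.2.1 (lay c U m) (fun x => (c : ℝ≥0∞) * chi (U m) x)
        (memL_lay hL hU c m) (memL_smul hL (memL_chi hL (hU m)) c)
      rw [h2, ih, hF.1 c (chi (U m)) (memL_chi hL (hU m)), Finset.sum_range_succ]

end Aux4
section Aux5

variable {L : Set (Set X)}

/-- Dyadic threshold `(k+1)/2^n`. -/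
noncomputable def thr (n k : ℕ) : ℝ≥0 := ((k : ℝ≥0) + 1) * (2 ^ n : ℝ≥0)⁻¹

lemma thr_double (n k : ℕ) : thr (n + 1) (2 * k + 1) = thr n k := by
  refine NNReal.coe_injective ?_
  unfold thr
  push_cast
  rw [pow_succ]
  field_simp
  ring

lemma thr_mono_k (n : ℕ) {k j : ℕ} (h : k ≤ j) : thr n k ≤ thr n j := by
  have : (k : ℝ≥0) ≤ (j : ℝ≥0) := by exact_mod_cast h
  exact mul_le_mul_of_nonneg_right (add_le_add_left this 1) (zero_le)

lemma half_add (n : ℕ) : (((2 ^ n : ℝ≥0) : ℝ≥0∞))⁻¹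
    = (((2 ^ (n + 1) : ℝ≥0) : ℝ≥0∞))⁻¹ + (((2 ^ (n + 1) : ℝ≥0) : ℝ≥0∞))⁻¹ := by
  rw [← ENNReal.coe_inv (by positivity), ← ENNReal.coe_inv (by positivity), ← ENNReal.coe_add]
  congr 1
  refine NNReal.coe_injective ?_
  push_cast
  rw [pow_succ]
  field_simp
  norm_num

lemma thr_coe_succ (n m : ℕ) : ((thr n m : ℝ≥0) : ℝ≥0∞)
    = ((m + 1 : ℕ) : ℝ≥0∞) * (((2 ^ n : ℝ≥0) : ℝ≥0∞))⁻¹ := by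
  unfold thr
  rw [ENNReal.coe_mul, ENNReal.coe_inv (by positivity)]
  norm_cast

/-- The value of the `n`-th dyadic approximant at a point with value `a`. -/
noncomputable def vapp (a : ℝ≥0∞) (n : ℕ) : ℝ≥0∞ :=
  ∑ k ∈ Finset.range (n * 2 ^ n),
    if ((thr n k : ℝ≥0) : ℝ≥0∞) < a then (((2 ^ n : ℝ≥0) : ℝ≥0∞))⁻¹ else 0

lemma sum_range_two_mul {M : Type*} [AddCommMonoid M] (N : ℕ) (f : ℕ → M) :
    ∑ j ∈ Finset.range (2 * N), f j = ∑ k ∈ Finset.range N, (f (2 * k) + f (2 * k + 1)) := by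
  induction N with
  | zero => simp
  | succ N ih =>
      have h2 : 2 * (N + 1) = 2 * N + 1 + 1 := by ring
      rw [h2, Finset.sum_range_succ, Finset.sum_range_succ, ih, Finset.sum_range_succ]
      abel

lemma vapp_mono_n (a : ℝ≥0∞) (n : ℕ) : vapp a n ≤ vapp a (n + 1) := by
  set f : ℕ → ℝ≥0∞ := fun j =>
    if ((thr (n + 1) j : ℝ≥0) : ℝ≥0∞) < a then (((2 ^ (n + 1) : ℝ≥0) : ℝ≥0∞))⁻¹ else 0 with hf
  have step1 : vapp a n ≤ ∑ k ∈ Finset.range (n * 2 ^ n), (f (2 * k) + f (2 * k + 1)) := by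
    refine Finset.sum_le_sum fun k _ => ?_
    by_cases hcond : ((thr n k : ℝ≥0) : ℝ≥0∞) < a
    · rw [if_pos hcond]
      have h1 : f (2 * k + 1) = (((2 ^ (n + 1) : ℝ≥0) : ℝ≥0∞))⁻¹ := by
        rw [hf]; simp only; rw [if_pos]; rw [thr_double]; exact hcond
      have h0 : f (2 * k) = (((2 ^ (n + 1) : ℝ≥0) : ℝ≥0∞))⁻¹ := by
        rw [hf]; simp only; rw [if_pos]
        refine lt_of_le_of_lt ?_ hcond
        rw [← thr_double n k]
        exact_mod_cast thr_mono_k (n + 1) (by omega)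
      rw [h0, h1, ← half_add]
    · rw [if_neg hcond]
      exact zero_le
  have step2 : ∑ k ∈ Finset.range (n * 2 ^ n), (f (2 * k) + f (2 * k + 1))
      = ∑ j ∈ Finset.range (2 * (n * 2 ^ n)), f j := (sum_range_two_mul _ f).symm
  have step3 : ∑ j ∈ Finset.range (2 * (n * 2 ^ n)), f j
      ≤ ∑ j ∈ Finset.range ((n + 1) * 2 ^ (n + 1)), f j := by
    refine Finset.sum_le_sum_of_subset (Finset.range_subset_range.2 ?_)
    calc 2 * (n * 2 ^ n) = n * 2 ^ (n + 1) := by ring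
      _ ≤ (n + 1) * 2 ^ (n + 1) := Nat.mul_le_mul_right _ (by omega)
  calc vapp a n ≤ _ := step1
    _ = _ := step2
    _ ≤ _ := step3
    _ = vapp a (n + 1) := rfl

lemma vapp_le (a : ℝ≥0∞) (n : ℕ) : vapp a n ≤ a := by
  set c : ℝ≥0∞ := (((2 ^ n : ℝ≥0) : ℝ≥0∞))⁻¹ with hc
  have key : ∀ m : ℕ,
      (∑ k ∈ Finset.range m, if ((thr n k : ℝ≥0) : ℝ≥0∞) < a then c else 0)
        ≤ min a ((m : ℝ≥0∞) * c) := by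
    intro m
    induction m with
    | zero => simp
    | succ m ih =>
        rw [Finset.sum_range_succ]
        have hmc : ((m + 1 : ℕ) : ℝ≥0∞) * c = (m : ℝ≥0∞) * c + c := by
          rw [Nat.cast_succ, add_mul, one_mul]
        have hthr : ((thr n m : ℝ≥0) : ℝ≥0∞) = ((m + 1 : ℕ) : ℝ≥0∞) * c :=
          thr_coe_succ n m
        by_cases hcond : ((thr n m : ℝ≥0) : ℝ≥0∞) < a
        · rw [if_pos hcond]
          refine le_trans (add_le_add_left ih c) ?_
          refine le_min ?_ ?_
          · calc min a ((m : ℝ≥0∞) * c) + c ≤ (m : ℝ≥0∞) * c + c :=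
                  add_le_add_left (min_le_right _ _) c
              _ = ((m + 1 : ℕ) : ℝ≥0∞) * c := hmc.symm
              _ = ((thr n m : ℝ≥0) : ℝ≥0∞) := hthr.symm
              _ ≤ a := hcond.le
          · calc min a ((m : ℝ≥0∞) * c) + c ≤ (m : ℝ≥0∞) * c + c :=
                  add_le_add_left (min_le_right _ _) c
              _ = ((m + 1 : ℕ) : ℝ≥0∞) * c := hmc.symm
        · rw [if_neg hcond, add_zero]
          refine le_trans ih (min_le_min le_rfl ?_)
          rw [hmc]
          exact le_self_add
  exact le_trans (key _) (min_le_left _ _)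

lemma vapp_ge {a : ℝ≥0∞} {n k : ℕ} (hk : k + 1 ≤ n * 2 ^ n)
    (ha : ((thr n k : ℝ≥0) : ℝ≥0∞) < a) : ((thr n k : ℝ≥0) : ℝ≥0∞) ≤ vapp a n := by
  set c : ℝ≥0∞ := (((2 ^ n : ℝ≥0) : ℝ≥0∞))⁻¹ with hc
  have h1 : ((thr n k : ℝ≥0) : ℝ≥0∞) = ∑ _j ∈ Finset.range (k + 1), c := by
    rw [Finset.sum_const, Finset.card_range, nsmul_eq_mul, thr_coe_succ]
  rw [h1]
  have h2 : ∀ j ∈ Finset.range (k + 1),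
      c ≤ if ((thr n j : ℝ≥0) : ℝ≥0∞) < a then c else 0 := by
    intro j hj
    rw [Finset.mem_range] at hj
    rw [if_pos]
    refine lt_of_le_of_lt ?_ ha
    exact_mod_cast thr_mono_k n (by omega)
  calc (∑ _j ∈ Finset.range (k + 1), c)
      ≤ ∑ j ∈ Finset.range (k + 1), (if ((thr n j : ℝ≥0) : ℝ≥0∞) < a then c else 0) :=
        Finset.sum_le_sum h2
    _ ≤ vapp a n := Finset.sum_le_sum_of_subset (Finset.range_subset_range.2 hk)

lemma iSup_vapp (a : ℝ≥0∞) : ⨆ n, vapp a n = a := by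
  refine le_antisymm (iSup_le fun n => vapp_le a n) ?_
  refine ENNReal.le_of_forall_nnreal_lt fun r hr => ?_
  obtain ⟨n₀, hn₀⟩ := ENNReal.exists_inv_two_pow_lt (a := a - r) (by
    rw [ne_eq, tsub_eq_zero_iff_le, not_le]; exact hr)
  set n : ℕ := max n₀ (⌈(r : ℝ≥0)⌉₊ + 2) with hn
  set β : ℝ≥0 := 2 ^ n with hβ
  have hβpos : 0 < β := by positivity
  have hcn : ((β⁻¹ : ℝ≥0) : ℝ≥0∞) ≤ (2 : ℝ≥0∞)⁻¹ ^ n₀ := by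
    rw [← ENNReal.inv_pow, ENNReal.coe_inv hβpos.ne']
    refine ENNReal.inv_le_inv.2 ?_
    rw [hβ]
    push_cast
    exact pow_le_pow_right₀ (by norm_num) (le_max_left _ _)
  set k : ℕ := ⌊(r : ℝ≥0) * β⌋₊ with hk
  have hrk : (r : ℝ≥0) < thr n k := by
    have h1 : (r : ℝ≥0) * β < (k : ℝ≥0) + 1 := Nat.lt_floor_add_one _
    have h2 := mul_lt_mul_of_pos_right h1 (inv_pos.2 hβpos)
    rw [mul_assoc, mul_inv_cancel₀ hβpos.ne', mul_one] at h2
    exact h2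
  have hthr_le : thr n k ≤ (r : ℝ≥0) + β⁻¹ := by
    have h1 : (k : ℝ≥0) ≤ (r : ℝ≥0) * β := Nat.floor_le (zero_le)
    calc thr n k = ((k : ℝ≥0) + 1) * β⁻¹ := rfl
      _ ≤ ((r : ℝ≥0) * β + 1) * β⁻¹ :=
          mul_le_mul_of_nonneg_right (add_le_add_left h1 1) (zero_le)
      _ = (r : ℝ≥0) + β⁻¹ := by
          rw [add_mul, mul_assoc, mul_inv_cancel₀ hβpos.ne', mul_one, one_mul]
  have hthr_lt_a : ((thr n k : ℝ≥0) : ℝ≥0∞) < a := by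
    calc ((thr n k : ℝ≥0) : ℝ≥0∞) ≤ (r : ℝ≥0∞) + ((β⁻¹ : ℝ≥0) : ℝ≥0∞) := by
          rw [← ENNReal.coe_add]
          exact ENNReal.coe_le_coe.2 hthr_le
      _ < (r : ℝ≥0∞) + (a - (r : ℝ≥0∞)) :=
          ENNReal.add_lt_add_left ENNReal.coe_ne_top (lt_of_le_of_lt hcn hn₀)
      _ = a := add_tsub_cancel_of_le hr.le
  have hkn : k + 1 ≤ n * 2 ^ n := by
    have hceil : ⌈(r : ℝ≥0)⌉₊ < n := lt_of_lt_of_le (by omega) (le_max_right _ _)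
    have hrn : (r : ℝ≥0) < (n : ℝ≥0) :=
      lt_of_le_of_lt (Nat.le_ceil _) (by exact_mod_cast hceil)
    have hfl : (r : ℝ≥0) * β < ((n * 2 ^ n : ℕ) : ℝ≥0) := by
      push_cast
      exact mul_lt_mul_of_pos_right hrn hβpos
    exact Nat.succ_le_of_lt ((Nat.floor_lt (zero_le)).2 hfl)
  exact le_trans (ENNReal.coe_le_coe.2 hrk.le)
    (le_trans (vapp_ge hkn hthr_lt_a) (le_iSup _ n))

end Aux5
section Aux6

variable {L : Set (Set X)} {ν : Set X → ℝ≥0∞} {F : (X → ℝ≥0∞) → ℝ≥0∞}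

/-- Level sets at dyadic thresholds. -/
noncomputable def lvlU (h : X → ℝ≥0∞) (n : ℕ) : ℕ → Set X :=
  fun k => {x | ((thr n k : ℝ≥0) : ℝ≥0∞) < h x}

/-- Dyadic approximation of `h`. -/
noncomputable def appr (h : X → ℝ≥0∞) (n : ℕ) : X → ℝ≥0∞ :=
  lay ((2 ^ n : ℝ≥0)⁻¹) (lvlU h n) (n * 2 ^ n)

lemma appr_apply (h : X → ℝ≥0∞) (n : ℕ) (x : X) : appr h n x = vapp (h x) n := by
  unfold appr lay vapp
  refine Finset.sum_congr rfl fun k _ => ?_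
  by_cases hx : ((thr n k : ℝ≥0) : ℝ≥0∞) < h x
  · rw [if_pos hx, chi_mem (show x ∈ lvlU h n k from hx), mul_one,
      ENNReal.coe_inv (by positivity)]
  · rw [if_neg hx, chi_not_mem (show x ∉ lvlU h n k from hx), mul_zero]

lemma memL_appr (hL : IsOmegaTop L) {h : X → ℝ≥0∞} (hh : MemL L h) (n : ℕ) :
    MemL L (appr h n) := memL_lay hL (fun _ => hh _) _ _

lemma appr_monotone (h : X → ℝ≥0∞) : Monotone (appr h) := by
  refine monotone_nat_of_le_succ fun n x => ?_
  rw [appr_apply, appr_apply]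
  exact vapp_mono_n (h x) n

lemma appr_iSup (h : X → ℝ≥0∞) : (fun x => ⨆ n, appr h n x) = h := by
  funext x
  simp only [appr_apply]
  exact iSup_vapp (h x)

lemma choquet_appr_eq (hL : IsOmegaTop L) (hν : IsVal L ν) (hc : IsOmegaContVal L ν)
    {h : X → ℝ≥0∞} (hh : MemL L h) :
    choquet ν h = ⨆ n, choquet ν (appr h n) := by
  have := choquet_iSup hν.2.1 hc (memL_appr hL hh) (appr_monotone h)
  rw [appr_iSup] at this
  exact this

lemma choquet_scalar (hL : IsOmegaTop L) (hν : IsVal L ν) (hc : IsOmegaContVal L ν)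
    {h : X → ℝ≥0∞} (hh : MemL L h) (a : ℝ≥0) :
    choquet ν (fun x => (a : ℝ≥0∞) * h x) = (a : ℝ≥0∞) * choquet ν h := by
  have e : (fun x => (a : ℝ≥0∞) * h x) = fun x => ⨆ n, (a : ℝ≥0∞) * appr h n x := by
    funext x
    rw [← ENNReal.mul_iSup]
    congr 1
    exact (congrFun (appr_iSup h) x).symm
  rw [e, choquet_iSup hν.2.1 hc (fun n => memL_smul hL (memL_appr hL hh n) a)
    (fun m n hmn x => mul_le_mul_right (appr_monotone h hmn x) _)]
  have h2 : ∀ n, choquet ν (fun x => (a : ℝ≥0∞) * appr h n x)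
      = (a : ℝ≥0∞) * choquet ν (appr h n) := by
    intro n
    have e2 : (fun x => (a : ℝ≥0∞) * appr h n x)
        = lay (a * (2 ^ n : ℝ≥0)⁻¹) (lvlU h n) (n * 2 ^ n) := by
      funext x
      unfold appr lay
      rw [Finset.mul_sum]
      refine Finset.sum_congr rfl fun k _ => ?_
      rw [← mul_assoc, ← ENNReal.coe_mul]
    have hsum : choquet ν (appr h n)
        = ∑ k ∈ Finset.range (n * 2 ^ n), (((2 ^ n : ℝ≥0)⁻¹ : ℝ≥0) : ℝ≥0∞) * ν (lvlU h n k) :=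
      choquet_lay (U := lvlU h n) hL hν (fun _ => hh _) _ _
    rw [e2, choquet_lay (U := lvlU h n) hL hν (fun _ => hh _) _ _, hsum, Finset.mul_sum]
    refine Finset.sum_congr rfl fun k _ => ?_
    rw [← mul_assoc, ← ENNReal.coe_mul]
  calc (⨆ n, choquet ν fun x => (a : ℝ≥0∞) * appr h n x)
      = ⨆ n, (a : ℝ≥0∞) * choquet ν (appr h n) := iSup_congr h2
    _ = (a : ℝ≥0∞) * ⨆ n, choquet ν (appr h n) := (ENNReal.mul_iSup _ _).symm
    _ = (a : ℝ≥0∞) * choquet ν h := by rw [← choquet_appr_eq hL hν hc hh]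

lemma choquet_additive (hL : IsOmegaTop L) (hν : IsVal L ν) (hc : IsOmegaContVal L ν)
    {h h' : X → ℝ≥0∞} (hh : MemL L h) (hh' : MemL L h') :
    choquet ν (fun x => h x + h' x) = choquet ν h + choquet ν h' := by
  have key1 : ∀ n, choquet ν (fun x => h x + appr h' n x)
      = choquet ν h + choquet ν (appr h' n) := by
    intro n
    rw [show choquet ν (fun x => h x + appr h' n x)
        = choquet ν (fun x => h x + lay ((2 ^ n : ℝ≥0)⁻¹) (lvlU h' n) (n * 2 ^ n) x) from rfl]
    have hsum : choquet ν (appr h' n)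
        = ∑ k ∈ Finset.range (n * 2 ^ n), (((2 ^ n : ℝ≥0)⁻¹ : ℝ≥0) : ℝ≥0∞) * ν (lvlU h' n k) :=
      choquet_lay (U := lvlU h' n) hL hν (fun _ => hh' _) _ _
    rw [choquet_add_lay (U := lvlU h' n) hL hν hh (fun _ => hh' _) _ _, hsum]
  have e : (fun x => h x + h' x) = fun x => ⨆ n, (h x + appr h' n x) := by
    funext x
    rw [← ENNReal.add_iSup]
    congr 1
    exact (congrFun (appr_iSup h') x).symm
  rw [e, choquet_iSup hν.2.1 hc (fun n => memL_add hL hh (memL_appr hL hh' n))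
    (fun m n hmn x => add_le_add_right (appr_monotone h' hmn x) _)]
  calc (⨆ n, choquet ν fun x => h x + appr h' n x)
      = ⨆ n, (choquet ν h + choquet ν (appr h' n)) := iSup_congr key1
    _ = choquet ν h + ⨆ n, choquet ν (appr h' n) := (ENNReal.add_iSup _).symm
    _ = choquet ν h + choquet ν h' := by rw [← choquet_appr_eq hL hν hc hh']

lemma F_mono (hF : IsLinOmegaFunc L F) {h h' : X → ℝ≥0∞} (hh : MemL L h) (hh' : MemL L h')
    (hle : ∀ x, h x ≤ h' x) : F h ≤ F h' := by
  set g : ℕ → X → ℝ≥0∞ := fun n => if n = 0 then h else h' with hg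
  have hgm : ∀ n, MemL L (g n) := by
    intro n
    rw [hg]
    dsimp only
    split
    · exact hh
    · exact hh'
  have hgmono : Monotone g := by
    intro m n hmn
    by_cases hm : m = 0
    · by_cases hn : n = 0
      · simp only [hg, hm, hn, if_pos]; exact le_rfl
      · simp only [hg, hm, if_pos, if_neg hn]; exact hle
    · have hn : n ≠ 0 := by omega
      simp only [hg, if_neg hm, if_neg hn]; exact le_rfl
  have hsup : (fun x => ⨆ n, g n x) = h' := by
    funext x
    apply le_antisymm
    · refine iSup_le fun n => ?_
      by_cases hn : n = 0
      · simp only [hg, hn, if_pos]; exact hle x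
      · simp only [hg, if_neg hn]; exact le_rfl
    · refine le_iSup_of_le 1 ?_
      simp only [hg]
      norm_num
  have hFsup := hF.2.2 g hgm hgmono
  rw [hsup] at hFsup
  rw [hFsup]
  refine le_iSup_of_le 0 ?_
  simp only [hg, if_pos]
  exact le_rfl

lemma nuF_val (hL : IsOmegaTop L) (hF : IsLinOmegaFunc L F) :
    IsVal L (fun U => F (chi U)) := by
  refine ⟨?_, ?_, ?_⟩
  · show F (chi ∅) = 0
    rw [chi_zero]
    exact F_zero hL hF
  · intro U hU V hV hUV
    refine F_mono hF (memL_chi hL hU) (memL_chi hL hV) fun x => ?_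
    by_cases hx : x ∈ U
    · rw [chi_mem hx, chi_mem (hUV hx)]
    · rw [chi_not_mem hx]; exact zero_le
  · intro U hU V hV
    have hpt : (fun x => chi (U ∪ V) x + chi (U ∩ V) x) = fun x => chi U x + chi V x := by
      funext x
      by_cases hU' : x ∈ U <;> by_cases hV' : x ∈ V
      · rw [chi_mem (Set.mem_union_left V hU'), chi_mem (Set.mem_inter hU' hV'),
          chi_mem hU', chi_mem hV']
      · rw [chi_mem (Set.mem_union_left V hU'), chi_not_mem (fun hc => hV' hc.2),
          chi_mem hU', chi_not_mem hV']
      · rw [chi_mem (Set.mem_union_right U hV'), chi_not_mem (fun hc => hU' hc.1),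
          chi_not_mem hU', chi_mem hV']
        exact add_comm 1 0
      · rw [chi_not_mem (fun hc => hc.elim hU' hV'), chi_not_mem (fun hc => hU' hc.1),
          chi_not_mem hU', chi_not_mem hV']
    have h1 := hF.2.1 (chi (U ∪ V)) (chi (U ∩ V)) (memL_chi hL (hL.1.2.2.1 _ hU _ hV))
      (memL_chi hL (hL.1.2.2.2 _ hU _ hV))
    have h2 := hF.2.1 (chi U) (chi V) (memL_chi hL hU) (memL_chi hL hV)
    rw [← h1, ← h2, hpt]

lemma nuF_cont (hL : IsOmegaTop L) (hF : IsLinOmegaFunc L F) :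
    IsOmegaContVal L (fun U => F (chi U)) := by
  intro U hU hmono
  have hpt : chi (⋃ n, U n) = fun x => ⨆ n, chi (U n) x := by
    funext x
    by_cases hx : x ∈ ⋃ n, U n
    · rw [chi_mem hx]
      obtain ⟨n, hn⟩ := Set.mem_iUnion.1 hx
      apply le_antisymm
      · exact le_iSup_of_le n (by rw [chi_mem hn])
      · refine iSup_le fun m => ?_
        by_cases hm : x ∈ U m
        · rw [chi_mem hm]
        · rw [chi_not_mem hm]; exact zero_le_one
    · rw [chi_not_mem hx]
      exact (ENNReal.iSup_eq_zero.2 fun n =>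
        chi_not_mem (fun hc => hx (Set.mem_iUnion.2 ⟨n, hc⟩))).symm
  simp only
  rw [hpt]
  refine hF.2.2 _ (fun n => memL_chi hL (hU n)) fun m n hmn x => ?_
  by_cases hx : x ∈ U m
  · rw [chi_mem hx, chi_mem (hmono hmn hx)]
  · rw [chi_not_mem hx]; exact zero_le

lemma F_eq_choquet (hL : IsOmegaTop L) (hF : IsLinOmegaFunc L F) {h : X → ℝ≥0∞}
    (hh : MemL L h) : F h = choquet (fun U => F (chi U)) h := by
  set ν : Set X → ℝ≥0∞ := fun U => F (chi U) with hνdef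
  have hν : IsVal L ν := nuF_val hL hF
  have hc : IsOmegaContVal L ν := nuF_cont hL hF
  have h1 : F h = ⨆ n, F (appr h n) := by
    conv_lhs => rw [← appr_iSup h]
    exact hF.2.2 (fun n => appr h n) (memL_appr hL hh) (appr_monotone h)
  have h2 : ∀ n, F (appr h n) = choquet ν (appr h n) := by
    intro n
    rw [show F (appr h n) = F (lay ((2 ^ n : ℝ≥0)⁻¹) (lvlU h n) (n * 2 ^ n)) from rfl]
    rw [F_lay (U := lvlU h n) hL hF (fun _ => hh _) _ _,
      show choquet ν (appr h n)
        = choquet ν (lay ((2 ^ n : ℝ≥0)⁻¹) (lvlU h n) (n * 2 ^ n)) from rfl,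
      choquet_lay (U := lvlU h n) hL hν (fun _ => hh _) _ _]
  rw [h1, choquet_appr_eq hL hν hc hh]
  exact iSup_congr h2

end Aux6
/-- one-to-one correspondence between ω-continuous valuations and
linear ω-continuous functionals, via `F(h) = ∫ h dν` and `ν(U) = F(χ_U)`. -/
theorem stmt8 (L : Set (Set X)) (hL : IsOmegaTop L) :
    (∀ ν : Set X → ℝ≥0∞, IsVal L ν → IsOmegaContVal L ν →
        IsLinOmegaFunc L (choquet ν) ∧ ∀ U ∈ L, choquet ν (chi U) = ν U) ∧
      (∀ F : (X → ℝ≥0∞) → ℝ≥0∞, IsLinOmegaFunc L F →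
        IsVal L (fun U => F (chi U)) ∧ IsOmegaContVal L (fun U => F (chi U)) ∧
          ∀ h : X → ℝ≥0∞, MemL L h → F h = choquet (fun U => F (chi U)) h) := by
  constructor
  · intro ν hν hc
    exact ⟨⟨fun a h hh => choquet_scalar hL hν hc hh a,
      fun h h' hh hh' => choquet_additive hL hν hc hh hh',
      fun h hh hm => choquet_iSup hν.2.1 hc hh hm⟩,
      fun U hU => choquet_chi hν hU⟩
  · intro F hF
    exact ⟨nuF_val hL hF, nuF_cont hL hF, fun h hh => F_eq_choquet hL hF hh⟩
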